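/- Let f : ℝⁿ → ℝ ∪ {+∞} be a proper lower semicontinuous convex function and x* a global minimizer. Then x* is a sharp minimizer of f (i.e., there exist κ, δ > 0 such that f(x) - f(x*) ≥ κ‖x - x*‖ for all ‖x - x*‖ ≤ δ) if and only if 0 ∈ int ∂f(x*). -/

import Mathlib

open scoped InnerProductSpace

/-- For a proper lsc convex function `f : ℝⁿ → ℝ ∪ {+∞}` and a global
minimizer `x*`, `x*` is a sharp minimizer (∃ κ, δ > 0 with
`f x - f x* ≥ κ‖x - x*‖` whenever `‖x - x*‖ ≤ δ`) iff `0 ∈ int ∂f(x*)`. -/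
theorem sharp_minimizer_iff_zero_mem_interior_subdifferential
    (n : ℕ) (f : EuclideanSpace ℝ (Fin n) → EReal)
    (hproper_bot : ∀ x, ⊥ < f x) (hproper_top : ∃ x, f x < ⊤)
    (hconvex : ∀ x y, ∀ a b : ℝ, 0 ≤ a → 0 ≤ b → a + b = 1 →
      f (a • x + b • y) ≤ (a : EReal) * f x + (b : EReal) * f y)
    (hlsc : LowerSemicontinuous f)
    (xstar : EuclideanSpace ℝ (Fin n)) (hmin : ∀ x, f xstar ≤ f x) :
    (∃ κ > (0 : ℝ), ∃ δ > (0 : ℝ), ∀ x, ‖x - xstar‖ ≤ δ →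
        f xstar + ((κ * ‖x - xstar‖ : ℝ) : EReal) ≤ f x) ↔
      (0 : EuclideanSpace ℝ (Fin n)) ∈
        interior {s | ∀ x, f xstar + ((⟪s, x - xstar⟫_ℝ : ℝ) : EReal) ≤ f x} := by
  obtain ⟨x₀, hx₀⟩ := hproper_top
  have hbot : f xstar ≠ ⊥ := (hproper_bot xstar).ne'
  have htop : f xstar ≠ ⊤ := (lt_of_le_of_lt (hmin x₀) hx₀).ne
  set r : ℝ := (f xstar).toReal with hrdef
  have hr : f xstar = (r : EReal) := (EReal.coe_toReal htop hbot).symm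
  constructor
  · rintro ⟨κ, hκ, δ, hδ, hsharp⟩
    have hglobal : ∀ x, f xstar + ((κ * ‖x - xstar‖ : ℝ) : EReal) ≤ f x := by
      intro x
      by_cases hle : ‖x - xstar‖ ≤ δ
      · exact hsharp x hle
      push_neg at hle
      by_cases hfx : f x = ⊤
      · simp [hfx]
      have hfxb : f x ≠ ⊥ := (hproper_bot x).ne'
      have hnorm : (0:ℝ) < ‖x - xstar‖ := lt_trans hδ hle
      set t : ℝ := δ / ‖x - xstar‖ with htdef
      have ht0 : 0 < t := div_pos hδ hnorm
      have ht1 : t < 1 := (div_lt_one hnorm).2 hle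
      have htn : t * ‖x - xstar‖ = δ := div_mul_cancel₀ δ hnorm.ne'
      set y := (1 - t) • xstar + t • x with hydef
      have hconv := hconvex xstar x (1 - t) t (by linarith) ht0.le (by ring)
      rw [← hydef] at hconv
      set fx : ℝ := (f x).toReal with hfxdef
      have hfx' : f x = (fx : EReal) := (EReal.coe_toReal hfx hfxb).symm
      have hrhs : (((1-t):ℝ) : EReal) * f xstar + ((t:ℝ):EReal) * f x
          = (((1-t)*r + t*fx : ℝ) : EReal) := by
        rw [hr, hfx']; norm_cast
      rw [hrhs] at hconv
      have hyb : f y ≠ ⊥ := (hproper_bot y).ne'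
      have hyt : f y ≠ ⊤ := (lt_of_le_of_lt hconv (EReal.coe_lt_top _)).ne
      set fy : ℝ := (f y).toReal with hfydef
      have hfy' : f y = (fy : EReal) := (EReal.coe_toReal hyt hyb).symm
      rw [hfy'] at hconv
      have hconvR : fy ≤ (1-t)*r + t*fx := by exact_mod_cast hconv
      have hyx : y - xstar = t • (x - xstar) := by
        rw [hydef]
        module
      have hyd : ‖y - xstar‖ = δ := by
        rw [hyx, norm_smul, Real.norm_eq_abs, abs_of_pos ht0, htn]
      have hsy := hsharp y (le_of_eq hyd)
      rw [hr, hfy', hyd] at hsy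
      have hsyR : r + κ * δ ≤ fy := by exact_mod_cast hsy
      have hgoalR : r + κ * ‖x - xstar‖ ≤ fx := by
        nlinarith [mul_pos ht0 hnorm]
      rw [hr, hfx']
      exact_mod_cast hgoalR
    have hsub : Metric.ball (0 : EuclideanSpace ℝ (Fin n)) κ ⊆
        {s | ∀ x, f xstar + ((⟪s, x - xstar⟫_ℝ : ℝ) : EReal) ≤ f x} := by
      intro s hs x
      have hsn : ‖s‖ < κ := by simpa using hs
      have hin : ⟪s, x - xstar⟫_ℝ ≤ κ * ‖x - xstar‖ := by
        calc ⟪s, x - xstar⟫_ℝ ≤ ‖s‖ * ‖x - xstar‖ := real_inner_le_norm _ _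
          _ ≤ κ * ‖x - xstar‖ := by
            apply mul_le_mul_of_nonneg_right hsn.le (norm_nonneg _)
      calc f xstar + ((⟪s, x - xstar⟫_ℝ : ℝ) : EReal)
          ≤ f xstar + ((κ * ‖x - xstar‖ : ℝ) : EReal) := by
            apply add_le_add le_rfl
            exact_mod_cast hin
        _ ≤ f x := hglobal x
    exact interior_maximal hsub Metric.isOpen_ball (Metric.mem_ball_self hκ)
  · intro h0
    obtain ⟨ε, hε, hball⟩ := Metric.isOpen_iff.1 isOpen_interior _ h0
    have hball' : Metric.ball (0 : EuclideanSpace ℝ (Fin n)) ε ⊆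
        {s | ∀ x, f xstar + ((⟪s, x - xstar⟫_ℝ : ℝ) : EReal) ≤ f x} :=
      hball.trans interior_subset
    refine ⟨ε/2, by positivity, 1, one_pos, fun x _ => ?_⟩
    by_cases hx : x = xstar
    · simp [hx]
    · have hnorm : (0:ℝ) < ‖x - xstar‖ := by
        rw [norm_pos_iff, sub_ne_zero]; exact hx
      set s := ((ε/2) / ‖x - xstar‖) • (x - xstar) with hsdef
      have hs : s ∈ Metric.ball (0 : EuclideanSpace ℝ (Fin n)) ε := by
        rw [Metric.mem_ball, dist_zero_right, hsdef, norm_smul, Real.norm_eq_abs,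
          abs_of_pos (by positivity), div_mul_cancel₀ _ hnorm.ne']
        linarith
      have hkey := hball' hs x
      have hinner : ⟪s, x - xstar⟫_ℝ = (ε/2) * ‖x - xstar‖ := by
        rw [hsdef, real_inner_smul_left, real_inner_self_eq_norm_mul_norm]
        field_simp
      rw [hinner] at hkey
      exact hkey
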